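/- The Smolin state is invariant under exchanging its second and third tensor factors: U ρ_S U† = ρ_S, where U is the unitary on (ℂ²)^{⊗4} swapping factors 2 and 3. Equivalently, (1/4) Σ_{i=1}^4 B^i_{A1B1} ⊗ B^i_{A2B2} = (1/4) Σ_{i=1}^4 B^i_{A1A2} ⊗ B^i_{B1B2}, exhibiting the Smolin state as separable across the bipartition A1A2 : B1B2. -/

import Mathlib

/-!
Statement 5: The Smolin state `ρ_S = (1/4) Σᵢ P_i ⊗ P_i` on `(ℂ²)^{⊗4}` (tensor factors
ordered A1, B1, A2, B2) is invariant under the unitary `U` swapping the second and third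
tensor factors: `U ρ_S U† = ρ_S`.  Equivalently,
`(1/4) Σᵢ Bⁱ_{A1B1} ⊗ Bⁱ_{A2B2} = (1/4) Σᵢ Bⁱ_{A1A2} ⊗ Bⁱ_{B1B2}`.
-/

noncomputable section
open Matrix
open scoped Kronecker

/-- The two-qubit index set. -/
abbrev TwoQ : Type := Fin 2 × Fin 2

/-- Inverse square root of 2 in `ℂ`. -/
def c2 : ℂ := ((Real.sqrt 2 : ℂ))⁻¹

/-- The standard basis vectors of `ℂ²` as plain functions. -/
def e (a : Fin 2) : Fin 2 → ℂ := fun b => if b = a then 1 else 0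

/-- Tensor product of coordinate vectors. -/
def tpv {ι κ : Type} (x : ι → ℂ) (y : κ → ℂ) : ι × κ → ℂ := fun p => x p.1 * y p.2

/-- The four Bell states `B¹ = (|00⟩+|11⟩)/√2`, `B² = (|00⟩−|11⟩)/√2`,
`B³ = (|01⟩+|10⟩)/√2`, `B⁴ = (|01⟩−|10⟩)/√2`. -/
def bell : Fin 4 → (TwoQ → ℂ) :=
  ![c2 • (tpv (e 0) (e 0) + tpv (e 1) (e 1)),
    c2 • (tpv (e 0) (e 0) - tpv (e 1) (e 1)),
    c2 • (tpv (e 0) (e 1) + tpv (e 1) (e 0)),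
    c2 • (tpv (e 0) (e 1) - tpv (e 1) (e 0))]

/-- The rank-one projection `P_i = |Bⁱ⟩⟨Bⁱ|` as a matrix. -/
def bellProj (i : Fin 4) : Matrix TwoQ TwoQ ℂ :=
  Matrix.of fun a b => bell i a * star (bell i b)

/-- The Smolin state `ρ_S = (1/4) Σᵢ P_i ⊗ P_i`, the first copy acting on the
factors `(A1, B1)` and the second on `(A2, B2)`. -/
def smolin : Matrix (TwoQ × TwoQ) (TwoQ × TwoQ) ℂ :=
  (1 / 4 : ℂ) • ∑ i : Fin 4, bellProj i ⊗ₖ bellProj i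

/-- Exchange of the second and third tensor factors of `(ℂ²)^{⊗4}`:
`((a1, b1), (a2, b2)) ↦ ((a1, a2), (b1, b2))` on the index set. -/
def swap23 : (TwoQ × TwoQ) ≃ (TwoQ × TwoQ) where
  toFun p := ((p.1.1, p.2.1), (p.1.2, p.2.2))
  invFun p := ((p.1.1, p.2.1), (p.1.2, p.2.2))
  left_inv p := rfl
  right_inv p := rfl

/-- The unitary permutation matrix implementing `swap23`. -/
def U : Matrix (TwoQ × TwoQ) (TwoQ × TwoQ) ℂ :=
  Matrix.of fun p q => if p = swap23 q then 1 else 0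

/-- Integer sign table for the Bell states: `bell i a = c2 * f i a`. -/
def f : Fin 4 → TwoQ → ℤ :=
  ![fun a => if a = (0,0) then 1 else if a = (1,1) then 1 else 0,
    fun a => if a = (0,0) then 1 else if a = (1,1) then -1 else 0,
    fun a => if a = (0,1) then 1 else if a = (1,0) then 1 else 0,
    fun a => if a = (0,1) then 1 else if a = (1,0) then -1 else 0]

lemma bell_eq (i : Fin 4) (a : TwoQ) : bell i a = c2 * ((f i a : ℤ) : ℂ) := by
  obtain ⟨a1, a2⟩ := a
  fin_cases i <;> fin_cases a1 <;> fin_cases a2 <;>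
    norm_num [bell, f, tpv, e, Prod.ext_iff, Matrix.cons_val_zero,
      Matrix.cons_val_one, Matrix.head_cons, Matrix.vecHead, Matrix.vecTail]

/-- The integer entry table of `16 • smolin`. -/
def g (p q : TwoQ × TwoQ) : ℤ :=
  f 0 p.1 * f 0 q.1 * (f 0 p.2 * f 0 q.2) + f 1 p.1 * f 1 q.1 * (f 1 p.2 * f 1 q.2)
  + f 2 p.1 * f 2 q.1 * (f 2 p.2 * f 2 q.2) + f 3 p.1 * f 3 q.1 * (f 3 p.2 * f 3 q.2)

lemma smolin_apply (p q : TwoQ × TwoQ) :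
    smolin p q = (1 / 16 : ℂ) * ((g p q : ℤ) : ℂ) := by
  obtain ⟨p1, p2⟩ := p
  obtain ⟨q1, q2⟩ := q
  have hs : star c2 = c2 := by simp [c2, ← Complex.ofReal_inv]
  have h2 : c2 * c2 = 1 / 2 := by
    rw [c2, ← mul_inv, ← Complex.ofReal_mul, Real.mul_self_sqrt (by norm_num)]
    norm_num
  simp only [smolin, Matrix.smul_apply, Matrix.sum_apply, Matrix.add_apply, Fin.sum_univ_four,
    Matrix.kroneckerMap_apply, bellProj, Matrix.of_apply, bell_eq, star_mul', hs,
    Complex.star_def, map_intCast, g, smul_eq_mul]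
  push_cast
  linear_combination ((1/4 : ℂ) * (((f 0 p1 : ℂ) * f 0 q1 * (f 0 p2 * f 0 q2)
    + (f 1 p1 : ℂ) * f 1 q1 * (f 1 p2 * f 1 q2)
    + (f 2 p1 : ℂ) * f 2 q1 * (f 2 p2 * f 2 q2)
    + (f 3 p1 : ℂ) * f 3 q1 * (f 3 p2 * f 3 q2))) * (c2 * c2 + 1/2)) * h2

lemma smolin_sub : smolin.submatrix swap23 swap23 = smolin := by
  ext p q
  rw [Matrix.submatrix_apply, smolin_apply, smolin_apply]
  congr 2
  revert p q
  decide

/-- `U ρ_S U† = ρ_S`; equivalently, relabelling the tensor factors from the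
`A1B1 : A2B2` grouping to the `A1A2 : B1B2` grouping leaves `ρ_S` unchanged. -/
theorem smolin_swap_invariant :
    U * smolin * Uᴴ = smolin ∧ smolin.submatrix swap23 swap23 = smolin := by
  refine ⟨?_, smolin_sub⟩
  have hiff : ∀ p r : TwoQ × TwoQ, p = swap23 r ↔ r = swap23 p := by
    intro p r
    constructor
    · rintro rfl; rfl
    · rintro rfl; rfl
  have h : U * smolin * Uᴴ = smolin.submatrix swap23 swap23 := by
    ext p q
    simp only [Matrix.mul_apply, Matrix.conjTranspose_apply, U, Matrix.of_apply,
      Matrix.submatrix_apply]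
    have hstar : ∀ (c : Prop) [Decidable c], star (if c then (1:ℂ) else 0) = if c then 1 else 0 := by
      intro c _; split <;> simp
    simp only [hiff, hstar, ite_mul, mul_ite, one_mul, mul_one,
      zero_mul, mul_zero, Finset.sum_ite_eq', Finset.mem_univ, if_true]
  rw [h, smolin_sub]
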